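/- arXiv:1304.3508 — 4 statements merged into one kernel-verified Lean document; each statement's English description precedes it below -/
import Mathlib

section
/- Every finitely generated ideal of the ring ℓ∞ of bounded complex sequences is a principal ideal, and is projective as an ℓ∞-module. -/
/- `ℓ∞` is the ring of bounded sequences of complex numbers, with pointwise operations.
We realize it as `lp (fun _ : ℕ => ℂ) ⊤`. -/

noncomputable section
set_option synthInstance.maxHeartbeats 400000
set_option maxHeartbeats 1000000

abbrev ellInf := lp (fun _ : ℕ => ℂ) ⊤

namespace EllAux

/-- Build an element of `ℓ∞` from a bounded function. -/
def mk (f : ℕ → ℂ) (C : ℝ) (h : ∀ n, ‖f n‖ ≤ C) : ellInf :=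
  ⟨f, memℓp_infty ⟨C, by rintro x ⟨n, rfl⟩; exact h n⟩⟩

@[simp] lemma mk_apply (f : ℕ → ℂ) (C : ℝ) (h : ∀ n, ‖f n‖ ≤ C) (n : ℕ) :
    (mk f C h : ℕ → ℂ) n = f n := rfl

lemma mul_apply (x y : ellInf) (n : ℕ) : (x * y : ellInf) n = x n * y n := by
  rw [lp.infty_coeFn_mul]; rfl

lemma add_apply (x y : ellInf) (n : ℕ) : (x + y : ellInf) n = x n + y n := rfl

/-- span of a pair is a span of a singleton -/
lemma span_pair (a b : ellInf) : ∃ g : ellInf, Ideal.span {a, b} = Ideal.span {g} := by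
  classical
  set s : ellInf := mk (fun n => if ‖b n‖ ≤ ‖a n‖ then a n else b n) (‖a‖ + ‖b‖)
    (by
      intro n
      dsimp only
      split_ifs
      · exact le_trans (lp.norm_apply_le_norm ENNReal.top_ne_zero a n)
          (le_add_of_nonneg_right (norm_nonneg _))
      · exact le_trans (lp.norm_apply_le_norm ENNReal.top_ne_zero b n)
          (le_add_of_nonneg_left (norm_nonneg _))) with hs
  have ha : a ∈ Ideal.span ({s} : Set ellInf) := by
    refine Ideal.mem_span_singleton'.mpr ?_
    refine ⟨mk (fun n => if ‖b n‖ ≤ ‖a n‖ then 1 else a n / b n) 1 ?_, ?_⟩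
    · intro n
      dsimp only
      split_ifs with h
      · simp
      · push_neg at h
        have hb : b n ≠ 0 := fun h0 => by
          rw [h0] at h; exact absurd h (by simpa using not_lt.mpr (norm_nonneg _))
        rw [norm_div, div_le_one ((norm_nonneg _).trans_lt h)]
        exact le_of_lt h
    · refine lp.ext (funext fun n => ?_)
      rw [mul_apply, mk_apply, hs, mk_apply]
      dsimp only
      split_ifs with h
      · rw [one_mul]
      · push_neg at h
        have hb : b n ≠ 0 := fun h0 => by
          rw [h0] at h; exact absurd h (by simpa using not_lt.mpr (norm_nonneg _))
        exact div_mul_cancel₀ _ hb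
  have hb : b ∈ Ideal.span ({s} : Set ellInf) := by
    refine Ideal.mem_span_singleton'.mpr ?_
    refine ⟨mk (fun n => if ‖b n‖ ≤ ‖a n‖ then b n / a n else 1) 1 ?_, ?_⟩
    · intro n
      dsimp only
      split_ifs with h
      · by_cases ha0 : a n = 0
        · have : b n = 0 := by
            rw [ha0] at h; simpa using norm_le_zero_iff.mp (by simpa using h)
          simp [ha0, this]
        · rw [norm_div, div_le_one (norm_pos_iff.mpr ha0)]
          exact h
      · simp
    · refine lp.ext (funext fun n => ?_)
      rw [mul_apply, mk_apply, hs, mk_apply]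
      dsimp only
      split_ifs with h
      · by_cases ha0 : a n = 0
        · have hb0 : b n = 0 := by
            rw [ha0] at h; simpa using norm_le_zero_iff.mp (by simpa using h)
          simp [ha0, hb0]
        · exact div_mul_cancel₀ _ ha0
      · rw [one_mul]
  refine ⟨s, le_antisymm ?_ ?_⟩
  · rw [Ideal.span_le]
    rintro x hx
    simp only [Set.mem_insert_iff, Set.mem_singleton_iff] at hx
    rcases hx with h | h
    · rw [h]; exact ha
    · rw [h]; exact hb
  · rw [Ideal.span_le, Set.singleton_subset_iff]
    refine Ideal.mem_span_pair.mpr ?_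
    refine ⟨mk (fun n => if ‖b n‖ ≤ ‖a n‖ then 1 else 0) 1
        (by intro n; dsimp only; split_ifs <;> simp),
      mk (fun n => if ‖b n‖ ≤ ‖a n‖ then 0 else 1) 1
        (by intro n; dsimp only; split_ifs <;> simp), ?_⟩
    refine lp.ext (funext fun n => ?_)
    rw [add_apply, mul_apply, mul_apply, mk_apply, mk_apply, hs, mk_apply]
    dsimp only
    split_ifs with h <;> simp

lemma span_finset (t : Finset ellInf) :
    ∃ g : ellInf, Ideal.span (t : Set ellInf) = Ideal.span {g} := by
  classical
  induction t using Finset.induction_on with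
  | empty => exact ⟨0, by rw [Finset.coe_empty, Ideal.span_empty,
      Ideal.span_singleton_eq_bot.mpr rfl]⟩
  | @insert a t' hat ih =>
    obtain ⟨g, hg⟩ := ih
    obtain ⟨g', hg'⟩ := span_pair a g
    refine ⟨g', ?_⟩
    rw [Finset.coe_insert, Ideal.span_insert, hg, ← Ideal.span_insert]
    exact hg'

/-- The ideal generated by a single element of ℓ∞ is projective. -/
lemma projective_span_singleton (g : ellInf) :
    Module.Projective ellInf (Ideal.span ({g} : Set ellInf)) := by
  classical
  set I := Ideal.span ({g} : Set ellInf) with hI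
  have memI : ∀ x : ellInf, x * g ∈ I := fun x => Ideal.mem_span_singleton'.mpr ⟨x, rfl⟩
  let π : ellInf →ₗ[ellInf] I :=
    { toFun := fun x => ⟨x * g, memI x⟩
      map_add' := fun x y => Subtype.ext (add_mul x y g)
      map_smul' := fun r x => Subtype.ext (by
        show (r • x) * g = r • (x * g)
        rw [smul_eq_mul, smul_eq_mul, mul_assoc]) }
  have hbdd : ∀ y : I, Memℓp (fun n => if g n = 0 then 0 else (y : ellInf) n / g n) ⊤ := by
    intro y
    obtain ⟨x, hx⟩ := Ideal.mem_span_singleton'.mp y.2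
    refine memℓp_infty ⟨‖x‖, ?_⟩
    rintro r ⟨n, rfl⟩
    dsimp only
    split_ifs with h
    · simpa using norm_nonneg x
    · have : (y : ellInf) n = x n * g n := by rw [← hx, mul_apply]
      rw [this, mul_div_cancel_right₀ _ h]
      exact lp.norm_apply_le_norm ENNReal.top_ne_zero x n
  let σ : I →ₗ[ellInf] ellInf :=
    { toFun := fun y => ⟨fun n => if g n = 0 then 0 else (y : ellInf) n / g n, hbdd y⟩
      map_add' := by
        intro y y'
        refine lp.ext (funext fun n => ?_)
        show (if g n = 0 then 0 else ((y : ellInf) + (y' : ellInf)) n / g n)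
          = (if g n = 0 then 0 else (y : ellInf) n / g n)
            + (if g n = 0 then 0 else (y' : ellInf) n / g n)
        rw [add_apply]
        by_cases h : g n = 0
        · simp [h]
        · simp only [h, if_false, add_div]
      map_smul' := by
        intro r y
        refine lp.ext (funext fun n => ?_)
        dsimp only [RingHom.id_apply]
        rw [smul_eq_mul, mul_apply]
        show (if g n = 0 then 0 else (r * (y : ellInf)) n / g n)
          = r n * (if g n = 0 then 0 else (y : ellInf) n / g n)
        rw [mul_apply]
        by_cases h : g n = 0
        · simp [h]
        · simp only [h, if_false, mul_div_assoc] }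
  have hsplit : π.comp σ = LinearMap.id := by
    apply LinearMap.ext
    intro y
    apply Subtype.ext
    apply lp.ext
    funext n
    show ((σ y : ellInf) * g) n = (y : ellInf) n
    rw [mul_apply]
    show (if g n = 0 then 0 else (y : ellInf) n / g n) * g n = (y : ellInf) n
    obtain ⟨x, hx⟩ := Ideal.mem_span_singleton'.mp y.2
    by_cases h : g n = 0
    · have : (y : ellInf) n = x n * g n := by rw [← hx, mul_apply]
      simp [h, this]
    · simp only [h, if_false]
      exact div_mul_cancel₀ _ h
  exact Module.Projective.of_split σ π hsplit

end EllAux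

/-- Every finitely generated ideal of `ℓ∞` is principal and projective
as an `ℓ∞`-module. -/
theorem fg_ideal_ellInf_principal_and_projective (I : Ideal ellInf) (hI : I.FG) :
    Submodule.IsPrincipal I ∧ Module.Projective ellInf I := by
  obtain ⟨t, ht⟩ := hI
  obtain ⟨g, hg⟩ := EllAux.span_finset t
  have hIg : I = Ideal.span {g} := by rw [← ht, hg]
  subst hIg
  exact ⟨⟨⟨g, by rw [Ideal.submodule_span_eq]⟩⟩, EllAux.projective_span_singleton g⟩
end
end

section
/- Let α₀, α₁ ∈ ℓ∞ and let I be the ideal of ℓ∞ generated by {α₀, α₁}. Then the sequence μ defined by μ_n = max(|α₀(n)|, |α₁(n)|) belongs to I, and I is generated by μ; in particular I is principal. -/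
noncomputable section
set_option synthInstance.maxHeartbeats 400000

def maxSeq (α₀ α₁ : ellInf) : ellInf :=
  ⟨fun n => ((max ‖α₀ n‖ ‖α₁ n‖ : ℝ) : ℂ), by
    refine memℓp_infty ?_
    obtain ⟨C₀, hC₀⟩ := memℓp_infty_iff.1 α₀.property
    obtain ⟨C₁, hC₁⟩ := memℓp_infty_iff.1 α₁.property
    refine ⟨max C₀ C₁, ?_⟩
    rintro _ ⟨n, rfl⟩
    have h₀ : ‖α₀ n‖ ≤ C₀ := by
      simpa using hC₀ ⟨n, rfl⟩
    have h₁ : ‖α₁ n‖ ≤ C₁ := by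
      simpa using hC₁ ⟨n, rfl⟩
    simp only [Complex.norm_real, Real.norm_eq_abs]
    rw [abs_of_nonneg (le_max_iff.2 (Or.inl (norm_nonneg _)))]
    exact max_le_max h₀ h₁ |>.trans_eq rfl⟩

def ofBdd (f : ℕ → ℂ) (h : ∀ n, ‖f n‖ ≤ 1) : ellInf :=
  ⟨f, memℓp_infty ⟨1, by rintro _ ⟨n, rfl⟩; exact h n⟩⟩

@[simp] lemma ofBdd_apply (f : ℕ → ℂ) (h) (n : ℕ) : (ofBdd f h) n = f n := rfl

lemma maxSeq_apply (α₀ α₁ : ellInf) (n : ℕ) :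
    maxSeq α₀ α₁ n = ((max (‖α₀ n‖) (‖α₁ n‖) : ℝ) : ℂ) := rfl

/-- Let `α₀, α₁ ∈ ℓ∞` and let `I` be the ideal of `ℓ∞` generated by
`{α₀, α₁}`.  Then the sequence `μ` with `μ_n = max (|α₀ n|, |α₁ n|)` belongs to `I`, and
`I` is generated by `μ`; in particular `I` is principal. -/
theorem maxSeq_mem_and_generates (α₀ α₁ : ellInf) :
    maxSeq α₀ α₁ ∈ Ideal.span {α₀, α₁} ∧
      Ideal.span {α₀, α₁} = Ideal.span {maxSeq α₀ α₁} := by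
  set μ := maxSeq α₀ α₁ with hμ
  -- β₀, β₁
  have habs : ∀ z : ℂ, ‖(starRingEnd ℂ) z / (‖z‖ : ℂ)‖ ≤ 1 := by
    intro z
    rcases eq_or_ne z 0 with rfl | hz
    · simp
    · rw [norm_div]
      have : (0:ℝ) < ‖z‖ := norm_pos_iff.mpr hz
      simp [Complex.norm_conj,
        abs_of_pos this, div_self this.ne']
  set β₀ := ofBdd (fun n => if ‖α₁ n‖ ≤ ‖α₀ n‖
      then (starRingEnd ℂ) (α₀ n) / (‖α₀ n‖ : ℂ) else 0)
    (by intro n; dsimp only; split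
        · exact habs _
        · simp) with hβ₀
  set β₁ := ofBdd (fun n => if ‖α₁ n‖ ≤ ‖α₀ n‖
      then 0 else (starRingEnd ℂ) (α₁ n) / (‖α₁ n‖ : ℂ))
    (by intro n; dsimp only; split
        · simp
        · exact habs _) with hβ₁
  have key : ∀ (z : ℂ), z ≠ 0 → (starRingEnd ℂ) z / (‖z‖ : ℂ) * z = (‖z‖ : ℂ) := by
    intro z hz
    have h1 : ((‖z‖ : ℂ)) ≠ 0 := by
      exact_mod_cast norm_ne_zero_iff.mpr hz
    rw [div_mul_eq_mul_div, mul_comm, Complex.mul_conj, Complex.normSq_eq_norm_sq]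
    push_cast
    rw [sq]
    field_simp
  have hmem : μ ∈ Ideal.span {α₀, α₁} := by
    rw [Ideal.mem_span_pair]
    refine ⟨β₀, β₁, ?_⟩
    apply lp.ext
    funext n
    have := lp.infty_coeFn_mul β₀ α₀
    have hmul : ∀ (f g : ellInf) (n : ℕ), (f * g) n = f n * g n := by
      intro f g n
      have := lp.infty_coeFn_mul f g
      exact congrFun this n
    have hadd : ∀ (f g : ellInf) (n : ℕ), (f + g) n = f n + g n := by
      intro f g n; exact congrFun (lp.coeFn_add f g) n
    show (β₀ * α₀ + β₁ * α₁ : ellInf) n = μ n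
    rw [hadd, hmul, hmul, hβ₀, hβ₁, ofBdd_apply, ofBdd_apply, maxSeq_apply]
    by_cases h : ‖α₁ n‖ ≤ ‖α₀ n‖
    · simp only [if_pos h]
      rcases eq_or_ne (α₀ n) 0 with h0 | h0
      · have h1 : α₁ n = 0 := by
          have := h; rw [h0] at this; simpa using this
        simp [h0, h1]
      · rw [key _ h0]; simp [max_eq_left h]
    · simp only [if_neg h]
      have h1 : α₁ n ≠ 0 := by
        intro hz
        apply h
        rw [hz]
        simpa using norm_nonneg (α₀ n)
      rw [key _ h1]
      simp [max_eq_right (le_of_not_ge h)]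
  refine ⟨hmem, le_antisymm ?_ ?_⟩
  · rw [Ideal.span_le]
    have hdvd : ∀ α : ellInf, (∀ n, ‖α n‖ ≤ ‖μ n‖) →
        α ∈ Ideal.span {μ} := by
      intro α hle
      rw [Ideal.mem_span_singleton]
      have hb : ∀ n, ‖(fun n => α n / μ n) n‖ ≤ 1 := by
        intro n
        rcases eq_or_ne (μ n) 0 with h0 | h0
        · simp [h0]
        · rw [norm_div, div_le_one (norm_pos_iff.2 h0)]
          simpa using hle n
      refine ⟨ofBdd (fun n => α n / μ n) hb, ?_⟩
      · apply lp.ext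
        funext n
        have hmul := congrFun (lp.infty_coeFn_mul μ (ofBdd (fun n => α n / μ n) hb)) n
        rw [hmul]
        show (α n : ℂ) = μ n * (α n / μ n)
        symm
        rcases eq_or_ne (μ n) 0 with h0 | h0
        · have : α n = 0 := by
            have := hle n; rw [h0] at this; simpa using this
          simp [h0, this]
        · field_simp
    have d0 : α₀ ∈ Ideal.span {μ} := hdvd α₀ (fun n => by
      rw [maxSeq_apply, Complex.norm_real, Real.norm_eq_abs,
        abs_of_nonneg (le_max_iff.2 (Or.inl (norm_nonneg (α₀ n))))]
      exact le_max_left _ _)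
    have d1 : α₁ ∈ Ideal.span {μ} := hdvd α₁ (fun n => by
      rw [maxSeq_apply, Complex.norm_real, Real.norm_eq_abs,
        abs_of_nonneg (le_max_iff.2 (Or.inl (norm_nonneg (α₀ n))))]
      exact le_max_right _ _)
    rintro x (rfl | rfl) <;> assumption
  · rw [Ideal.span_le, Set.singleton_subset_iff]
    exact hmem
end
end

section
/- Every ideal of ℓ∞ is flat as an ℓ∞-module. -/
/- `ℓ∞` is the ring of bounded sequences of complex numbers, with pointwise operations.
We realize it as `lp (fun _ : ℕ => ℂ) ⊤`. -/

noncomputable section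
set_option synthInstance.maxHeartbeats 400000

/-- A pointwise-bounded sequence gives an element of `ℓ∞`. -/
lemma memℓp_top_of_bound {f : ℕ → ℂ} (C : ℝ) (h : ∀ n, ‖f n‖ ≤ C) :
    Memℓp f (⊤ : ENNReal) :=
  memℓp_infty ⟨C, by rintro _ ⟨n, rfl⟩; exact h n⟩

/-- Every ideal of `ℓ∞` is flat as an `ℓ∞`-module. -/
theorem ideal_ellInf_flat (I : Ideal ellInf) : Module.Flat ellInf I := by
  apply Module.Flat.of_forall_isTrivialRelation
  intro ι f x h
  -- the pointwise relation
  have h1 : (∑ i, f i * ((x i : ellInf))) = (0 : ellInf) := by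
    simpa [map_sum, smul_eq_mul] using congrArg (Submodule.subtype I) h
  have hx : ∀ n, ∑ i, (f i : ℕ → ℂ) n * (x i : ellInf) n = 0 := by
    intro n
    have := congrFun (congrArg (fun z : ellInf => (z : ℕ → ℂ)) h1) n
    rw [lp.coeFn_sum, Finset.sum_apply] at this
    simpa [lp.coeFn_sum, lp.infty_coeFn_mul, Finset.sum_apply] using this
  -- the "absolute value" generator
  set g : ℕ → ℝ := fun n => ∑ i, ‖(x i : ellInf) n‖ with hg
  have hg_nonneg : ∀ n, 0 ≤ g n := fun n =>
    Finset.sum_nonneg fun i _ => norm_nonneg _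
  have hle : ∀ i n, ‖(x i : ellInf) n‖ ≤ g n := fun i n =>
    Finset.single_le_sum (f := fun i => ‖(x i : ellInf) n‖)
      (fun j _ => norm_nonneg _) (Finset.mem_univ i)
  have hgmem : Memℓp (fun n => (g n : ℂ)) (⊤ : ENNReal) := by
    apply memℓp_top_of_bound (∑ i, ‖x i‖)
    intro n
    rw [Complex.norm_real, Real.norm_of_nonneg (hg_nonneg n)]
    exact Finset.sum_le_sum fun i _ =>
      lp.norm_apply_le_norm ENNReal.top_ne_zero ((x i : ellInf)) n
  set gC : ellInf := ⟨fun n => (g n : ℂ), hgmem⟩ with hgC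
  -- the unimodular multipliers
  have hvmem : ∀ i, Memℓp
      (fun n => (starRingEnd ℂ) ((x i : ellInf) n) / (‖(x i : ellInf) n‖ : ℂ))
      (⊤ : ENNReal) := by
    intro i
    apply memℓp_top_of_bound 1
    intro n
    rw [norm_div, RCLike.norm_conj, Complex.norm_real, Real.norm_eq_abs,
      abs_of_nonneg (norm_nonneg _)]
    rcases eq_or_ne ((x i : ellInf) n) 0 with hz | hz
    · simp [hz]
    · rw [div_self (norm_ne_zero_iff.mpr hz)]
  set v : Fin ι → ellInf := fun i => ⟨_, hvmem i⟩ with hv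
  have kv : ∀ i n, (v i : ℕ → ℂ) n * (x i : ellInf) n = (‖(x i : ellInf) n‖ : ℂ) := by
    intro i n
    show (starRingEnd ℂ) ((x i : ellInf) n) / (‖(x i : ellInf) n‖ : ℂ) * (x i : ellInf) n
      = (‖(x i : ellInf) n‖ : ℂ)
    rcases eq_or_ne ((x i : ellInf) n) 0 with hz | hz
    · simp [hz]
    · have hnz : (‖(x i : ellInf) n‖ : ℂ) ≠ 0 := by
        simpa using norm_ne_zero_iff.mpr hz
      have habs : ((‖(x i : ellInf) n‖ : ℝ) : ℂ) ≠ 0 := by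
        simpa using hnz
      field_simp
      rw [mul_comm, Complex.mul_conj, Complex.normSq_eq_norm_sq]
      push_cast
      ring
  -- g lies in the ideal
  have hgI : gC ∈ I := by
    have : gC = ∑ i, v i * ((x i : ellInf)) := by
      apply lp.ext
      funext n
      have : ((∑ i, v i * ((x i : ellInf)) : ellInf) : ℕ → ℂ) n
          = ∑ i, (v i : ℕ → ℂ) n * (x i : ellInf) n := by
        rw [lp.coeFn_sum, Finset.sum_apply]
        simp [lp.coeFn_sum, lp.infty_coeFn_mul, Finset.sum_apply]
      rw [this]
      simp only [kv]
      show (g n : ℂ) = _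
      rw [hg]
      push_cast
      rfl
    rw [this]
    exact Ideal.sum_mem I fun i _ => Ideal.mul_mem_left I _ (SetLike.coe_mem (x i))
  -- the bounded quotients
  have hcmem : ∀ i, Memℓp (fun n => (x i : ellInf) n / (g n : ℂ)) (⊤ : ENNReal) := by
    intro i
    apply memℓp_top_of_bound 1
    intro n
    rw [norm_div, Complex.norm_real, Real.norm_eq_abs, abs_of_nonneg (hg_nonneg n)]
    rcases eq_or_ne (g n) 0 with hz | hz
    · have : ‖(x i : ellInf) n‖ = 0 := le_antisymm (hz ▸ hle i n) (norm_nonneg _)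
      simp [this, hz]
    · rw [div_le_one (lt_of_le_of_ne (hg_nonneg n) (Ne.symm hz))]
      exact hle i n
  set c : Fin ι → ellInf := fun i => ⟨_, hcmem i⟩ with hc
  refine ⟨1, fun i _ => c i, fun _ => ⟨gC, hgI⟩, ?_, ?_⟩
  · intro i
    rw [Finset.sum_const]
    ext1
    show (x i : ellInf) = (Finset.univ.card (α := Fin 1)) • (c i • (gC : ellInf))
    apply lp.ext
    funext n
    have hcard : (Finset.univ.card (α := Fin 1)) = 1 := rfl
    rw [hcard, one_smul, smul_eq_mul]
    have : ((c i * gC : ellInf) : ℕ → ℂ) n = (c i : ℕ → ℂ) n * (gC : ℕ → ℂ) n := by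
      simp [lp.infty_coeFn_mul]
    rw [this]
    show (x i : ellInf) n = (x i : ellInf) n / (g n : ℂ) * (g n : ℂ)
    rcases eq_or_ne (g n) 0 with hz | hz
    · have : ‖(x i : ellInf) n‖ = 0 := le_antisymm (hz ▸ hle i n) (norm_nonneg _)
      rw [norm_eq_zero.mp this]
      simp
    · rw [div_mul_cancel₀]
      simpa using hz
  · intro _
    apply lp.ext
    funext n
    have : ((∑ i, f i * c i : ellInf) : ℕ → ℂ) n
        = ∑ i, (f i : ℕ → ℂ) n * (c i : ℕ → ℂ) n := by
      rw [lp.coeFn_sum, Finset.sum_apply]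
      simp [lp.coeFn_sum, lp.infty_coeFn_mul, Finset.sum_apply]
    rw [this]
    have : ∀ i, (f i : ℕ → ℂ) n * (c i : ℕ → ℂ) n
        = (f i : ℕ → ℂ) n * (x i : ellInf) n / (g n : ℂ) := by
      intro i
      show (f i : ℕ → ℂ) n * ((x i : ellInf) n / (g n : ℂ)) = _
      ring
    simp only [this, ← Finset.sum_div, hx n]
    simp
end
end

section
/- Let 𝔄 be a unital complex Banach algebra. Then the ring ℓ^{∞−}(𝔄) = ∪_{q<∞} ℓ^q(𝔄) has the left triple factorization property: for every m ≥ 1 and every a¹, …, a^m ∈ ℓ^{∞−}(𝔄) there exist b¹, …, b^m, c, d ∈ ℓ^{∞−}(𝔄) such that a^i = c·d·b^i for all i and the right annihilators coincide: {v ∈ ℓ^{∞−}(𝔄) : d·v = 0} = {v ∈ ℓ^{∞−}(𝔄) : c·d·v = 0}. -/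
noncomputable section

/-- Upgrade summability of `f^p` to `f^q` for `p ≤ q`. -/
lemma summable_rpow_mono {f : ℕ → ℝ} (hf : ∀ n, 0 ≤ f n) {p q : ℝ} (hp : 0 < p)
    (hpq : p ≤ q) (h : Summable fun n => f n ^ p) : Summable fun n => f n ^ q := by
  have h0 : Filter.Tendsto (fun n => f n ^ p) Filter.atTop (nhds 0) := h.tendsto_atTop_zero
  have h1 : ∀ᶠ n in Filter.atTop, f n ^ p < 1 := h0.eventually_lt_const (by norm_num)
  obtain ⟨N, hN⟩ := h1.exists_forall_of_atTop
  rw [← summable_nat_add_iff N] at h ⊢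
  refine Summable.of_nonneg_of_le (fun n => Real.rpow_nonneg (hf _) _) (fun n => ?_) h
  have hle1 : f (n + N) ≤ 1 := by
    by_contra hgt
    push_neg at hgt
    have := Real.one_le_rpow hgt.le hp.le
    have := hN (n + N) (Nat.le_add_left _ _)
    linarith
  rcases eq_or_lt_of_le (hf (n + N)) with h0' | h0'
  · rw [← h0', Real.zero_rpow hp.ne', Real.zero_rpow (lt_of_lt_of_le hp hpq).ne']
  · exact Real.rpow_le_rpow_of_exponent_ge h0' hle1 hpq

/-- Summability of `(f+g)^Q` from summability of `f^Q` and `g^Q`. -/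
lemma summable_rpow_add {f g : ℕ → ℝ} (hf0 : ∀ n, 0 ≤ f n) (hg0 : ∀ n, 0 ≤ g n)
    {Q : ℝ} (hQ : 0 < Q) (hf : Summable fun n => f n ^ Q)
    (hg : Summable fun n => g n ^ Q) : Summable fun n => (f n + g n) ^ Q := by
  refine Summable.of_nonneg_of_le
    (fun n => Real.rpow_nonneg (add_nonneg (hf0 n) (hg0 n)) _)
    (fun n => ?_) (((hf.add hg).mul_left ((2:ℝ) ^ Q)))
  have key : (f n + g n) ^ Q ≤ (2:ℝ) ^ Q * max (f n) (g n) ^ Q := by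
    have h1 : f n + g n ≤ 2 * max (f n) (g n) := by
      rcases le_total (f n) (g n) with h | h
      · rw [max_eq_right h]; linarith
      · rw [max_eq_left h]; linarith
    calc (f n + g n) ^ Q ≤ (2 * max (f n) (g n)) ^ Q :=
          Real.rpow_le_rpow (add_nonneg (hf0 n) (hg0 n)) h1 hQ.le
      _ = (2:ℝ) ^ Q * max (f n) (g n) ^ Q :=
          Real.mul_rpow (by norm_num) (le_max_of_le_left (hf0 n))
  refine key.trans ?_
  gcongr
  rcases le_total (f n) (g n) with h | h
  · rw [max_eq_right h]
    exact le_add_of_nonneg_left (Real.rpow_nonneg (hf0 n) _)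
  · rw [max_eq_left h]
    exact le_add_of_nonneg_right (Real.rpow_nonneg (hg0 n) _)

lemma summable_rpow_finsum {ι : Type*} (t : Finset ι) (f : ι → ℕ → ℝ)
    (h0 : ∀ i n, 0 ≤ f i n) {Q : ℝ} (hQ : 0 < Q)
    (hf : ∀ i ∈ t, Summable fun n => f i n ^ Q) :
    Summable fun n => (∑ i ∈ t, f i n) ^ Q := by
  classical
  induction t using Finset.induction with
  | empty => simpa [Real.zero_rpow hQ.ne'] using summable_zero
  | @insert i t hi ih =>
    simp only [Finset.sum_insert hi]
    exact summable_rpow_add (h0 i) (fun n => Finset.sum_nonneg fun j _ => h0 j n) hQ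
      (hf i (Finset.mem_insert_self i t))
      (ih fun j hj => hf j (Finset.mem_insert_of_mem hj))

variable (A : Type) [NormedRing A] [NormOneClass A] [NormedAlgebra ℂ A] [CompleteSpace A]

/-- Membership in `ℓ^{∞−}(𝔄) = ∪_{q<∞} ℓ^q(𝔄)`: a sequence `α : ℕ → 𝔄` lies in some
`ℓ^q(𝔄)`, i.e. `∑_n ‖α_n‖^q < ∞` for some `0 < q < ∞`. -/
def MemLinfMinus (α : ℕ → A) : Prop :=
  ∃ q : ℝ, 0 < q ∧ Summable fun n => ‖α n‖ ^ q

/-- **Statement 11.** Let `𝔄` be a unital complex Banach algebra.  Then the ring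
`ℓ^{∞−}(𝔄)` (with pointwise operations) has the left triple factorization property: for
every `m ≥ 1` and `a¹, …, a^m ∈ ℓ^{∞−}(𝔄)` there are `b¹, …, b^m, c, d ∈ ℓ^{∞−}(𝔄)` with
`aⁱ = c·d·bⁱ` for all `i`, and the right annihilators of `d` and of `c·d` in `ℓ^{∞−}(𝔄)`
coincide. -/
theorem linfMinus_triple_factorization (m : ℕ) (hm : 1 ≤ m) (a : Fin m → ℕ → A)
    (ha : ∀ i, MemLinfMinus A (a i)) :
    ∃ (b : Fin m → ℕ → A) (c d : ℕ → A),
      (∀ i, MemLinfMinus A (b i)) ∧ MemLinfMinus A c ∧ MemLinfMinus A d ∧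
      (∀ i, a i = c * d * b i) ∧
      (∀ v : ℕ → A, MemLinfMinus A v → (d * v = 0 ↔ c * d * v = 0)) := by
  classical
  -- a common exponent
  set q : Fin m → ℝ := fun i => (ha i).choose with hqdef
  have hq : ∀ i, 0 < q i ∧ Summable fun n => ‖a i n‖ ^ q i := fun i => (ha i).choose_spec
  set Q : ℝ := 1 + ∑ i, q i with hQdef
  have hsumq : (0:ℝ) ≤ ∑ i, q i := Finset.sum_nonneg fun i _ => (hq i).1.le
  have hQ1 : 1 ≤ Q := le_add_of_nonneg_right hsumq
  have hQ0 : 0 < Q := lt_of_lt_of_le one_pos hQ1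
  have hqQ : ∀ i, q i ≤ Q := fun i => by
    have : q i ≤ ∑ j, q j :=
      Finset.single_le_sum (fun j _ => (hq j).1.le) (Finset.mem_univ i)
    linarith
  have haQ : ∀ i, Summable fun n => ‖a i n‖ ^ Q := fun i =>
    summable_rpow_mono (fun n => norm_nonneg _) (hq i).1 (hqQ i) (hq i).2
  -- the dominating positive sequence
  set s : ℕ → ℝ := fun n => (∑ i, ‖a i n‖) + (1/2 : ℝ) ^ n with hsdef
  have hs0 : ∀ n, 0 < s n := fun n =>
    add_pos_of_nonneg_of_pos (Finset.sum_nonneg fun i _ => norm_nonneg _) (by positivity)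
  have hgeom : Summable fun n => ((1/2 : ℝ) ^ n) ^ Q := by
    have key : ∀ n : ℕ, ((1/2 : ℝ) ^ n) ^ Q = (((1/2 : ℝ) ^ Q) ^ n : ℝ) := by
      intro n
      rw [← Real.rpow_natCast (1/2 : ℝ) n, ← Real.rpow_natCast ((1/2 : ℝ) ^ Q) n,
        ← Real.rpow_mul (by norm_num), ← Real.rpow_mul (by norm_num), mul_comm]
    simp only [key]
    exact summable_geometric_of_lt_one (Real.rpow_nonneg (by norm_num) _)
      (Real.rpow_lt_one (by norm_num) (by norm_num) hQ0)
  have hsQ : Summable fun n => s n ^ Q := by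
    refine summable_rpow_add (fun n => Finset.sum_nonneg fun i _ => norm_nonneg _)
      (fun n => by positivity) hQ0 ?_ hgeom
    exact summable_rpow_finsum Finset.univ (fun i n => ‖a i n‖)
      (fun i n => norm_nonneg _) hQ0 (fun i _ => haQ i)
  -- the factorization data
  set lam : ℕ → ℝ := fun n => s n ^ ((3:ℝ)⁻¹) with hlamdef
  have hlam0 : ∀ n, 0 < lam n := fun n => Real.rpow_pos_of_pos (hs0 n) _
  set mu : ℕ → ℝ := fun n => s n ^ (-(2 * (3:ℝ)⁻¹)) with hmudef
  set c : ℕ → A := fun n => ((lam n : ℂ)) • (1 : A) with hcdef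
  set b : Fin m → ℕ → A := fun i n => ((mu n : ℂ)) • a i n with hbdef
  have hcnorm : ∀ n, ‖c n‖ = lam n := by
    intro n
    rw [hcdef]
    simp [norm_smul, Complex.norm_real, abs_of_pos (hlam0 n)]
  have hcmem : MemLinfMinus A c := by
    refine ⟨3 * Q, by positivity, ?_⟩
    have : ∀ n, ‖c n‖ ^ (3 * Q) = s n ^ Q := by
      intro n
      rw [hcnorm n, hlamdef]
      rw [← Real.rpow_mul (hs0 n).le]
      congr 1
      ring
    simpa only [this] using hsQ
  have hbmem : ∀ i, MemLinfMinus A (b i) := by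
    intro i
    refine ⟨3 * Q, by positivity, ?_⟩
    refine Summable.of_nonneg_of_le (fun n => Real.rpow_nonneg (norm_nonneg _) _)
      (fun n => ?_) hsQ
    have hmu0 : 0 ≤ mu n := (Real.rpow_pos_of_pos (hs0 n) _).le
    have hb0 : ‖b i n‖ ≤ s n ^ ((3:ℝ)⁻¹) := by
      have hbn : ‖b i n‖ = mu n * ‖a i n‖ := by
        rw [hbdef]
        rw [norm_smul, Complex.norm_real, Real.norm_eq_abs, abs_of_nonneg hmu0]
      rw [hbn]
      have hale : ‖a i n‖ ≤ s n := by
        have h2 : ‖a i n‖ ≤ ∑ j, ‖a j n‖ :=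
          Finset.single_le_sum (f := fun j => ‖a j n‖) (fun j _ => norm_nonneg _)
            (Finset.mem_univ i)
        have h3 : (0:ℝ) < (1/2 : ℝ) ^ n := by positivity
        rw [hsdef]; dsimp only
        linarith
      calc mu n * ‖a i n‖ ≤ mu n * s n := by
            exact mul_le_mul_of_nonneg_left hale hmu0
        _ = s n ^ ((3:ℝ)⁻¹) := by
            have h1 : s n ^ (-(2 * (3:ℝ)⁻¹)) * s n ^ (1:ℝ) = s n ^ ((3:ℝ)⁻¹) := by
              rw [← Real.rpow_add (hs0 n)]; norm_num
            rw [hmudef]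
            simpa [Real.rpow_one] using h1
    calc ‖b i n‖ ^ (3 * Q) ≤ (s n ^ ((3:ℝ)⁻¹)) ^ (3 * Q) :=
          Real.rpow_le_rpow (norm_nonneg _) hb0 (by positivity)
      _ = s n ^ Q := by rw [← Real.rpow_mul (hs0 n).le]; congr 1; ring
  refine ⟨b, c, c, hbmem, hcmem, hcmem, ?_, ?_⟩
  · intro i
    funext n
    show a i n = c n * c n * b i n
    have hmul : c n * c n * b i n
        = ((lam n : ℂ) * (lam n : ℂ) * (mu n : ℂ)) • a i n := by
      rw [hcdef, hbdef]
      simp only [smul_mul_assoc, one_mul, smul_smul]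
    have hsc : (lam n : ℂ) * (lam n : ℂ) * (mu n : ℂ) = 1 := by
      rw [← Complex.ofReal_mul, ← Complex.ofReal_mul, ← Complex.ofReal_one]
      congr 1
      rw [hlamdef, hmudef]
      dsimp only
      rw [← Real.rpow_add (hs0 n), ← Real.rpow_add (hs0 n)]
      norm_num
    rw [hmul, hsc, one_smul]
  · intro v _
    have key : ∀ (w : ℕ → ℂ), (∀ n, w n ≠ 0) →
        ((fun n => (w n) • v n) = 0 ↔ v = 0) := by
      intro w hw
      constructor
      · intro h
        funext n
        have hn : w n • v n = 0 := congrFun h n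
        have := congrArg (fun x => (w n)⁻¹ • x) hn
        simpa [smul_smul, inv_mul_cancel₀ (hw n)] using this
      · intro h; rw [h]; funext n; simp
    have hd : (c * v = 0 ↔ v = 0) := by
      have : c * v = fun n => ((lam n : ℂ)) • v n := by
        funext n
        show c n * v n = _
        rw [hcdef]
        simp only [smul_mul_assoc, one_mul]
      rw [this]
      exact key _ (fun n => by
        simp only [ne_eq, Complex.ofReal_eq_zero]
        exact (hlam0 n).ne')
    have hcd : (c * c * v = 0 ↔ v = 0) := by
      have : c * c * v = fun n => (((lam n : ℂ)) * (lam n : ℂ)) • v n := by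
        funext n
        show c n * c n * v n = _
        rw [hcdef]
        simp only [smul_mul_assoc, one_mul, smul_smul]
      rw [this]
      exact key _ (fun n => by
        simp only [ne_eq, mul_eq_zero, Complex.ofReal_eq_zero]
        push_neg
        exact ⟨(hlam0 n).ne', (hlam0 n).ne'⟩)
    rw [hd, hcd]
end
end
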